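/- If every h-ideal of a hemiring R is h-idempotent, then the lattice of h-ideals of R (ordered by inclusion, with meet A ∩ B and join cl(A+B)) is a distributive lattice; in fact it is Brouwerian: for any h-ideals A, B, the set {I : I an h-ideal, A ∩ I ⊆ B} has a greatest element. -/

import Mathlib

open Pointwise

def IsLeftHIdeal {R : Type*} [NonUnitalSemiring R] (I : Set R) : Prop :=
  I.Nonempty ∧ (∀ a ∈ I, ∀ b ∈ I, a + b ∈ I) ∧
    (∀ r : R, ∀ a ∈ I, r * a ∈ I) ∧
    (∀ a ∈ I, ∀ b ∈ I, ∀ x y : R, x + a + y = b + y → x ∈ I)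

def IsRightHIdeal {R : Type*} [NonUnitalSemiring R] (I : Set R) : Prop :=
  I.Nonempty ∧ (∀ a ∈ I, ∀ b ∈ I, a + b ∈ I) ∧
    (∀ r : R, ∀ a ∈ I, a * r ∈ I) ∧
    (∀ a ∈ I, ∀ b ∈ I, ∀ x y : R, x + a + y = b + y → x ∈ I)

def IsHIdeal {R : Type*} [NonUnitalSemiring R] (I : Set R) : Prop :=
  I.Nonempty ∧ (∀ a ∈ I, ∀ b ∈ I, a + b ∈ I) ∧
    (∀ r : R, ∀ a ∈ I, r * a ∈ I) ∧ (∀ r : R, ∀ a ∈ I, a * r ∈ I) ∧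
    (∀ a ∈ I, ∀ b ∈ I, ∀ x y : R, x + a + y = b + y → x ∈ I)

def hCl {R : Type*} [NonUnitalSemiring R] (A : Set R) : Set R :=
  {x | ∃ a ∈ A, ∃ b ∈ A, ∃ y : R, x + a + y = b + y}

section Aux

variable {R : Type*} [NonUnitalSemiring R]

lemma IsHIdeal.zero_mem {I : Set R} (h : IsHIdeal I) : (0 : R) ∈ I := by
  obtain ⟨⟨a, ha⟩, _, _, _, h5⟩ := h
  exact h5 a ha a ha 0 0 (by simp)

lemma hCl_mono {S T : Set R} (h : S ⊆ T) : hCl S ⊆ hCl T := by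
  rintro x ⟨a, ha, b, hb, y, hy⟩
  exact ⟨a, h ha, b, h hb, y, hy⟩

lemma hCl_subset {S I : Set R} (hI : IsHIdeal I) (h : S ⊆ I) : hCl S ⊆ I := by
  rintro x ⟨a, ha, b, hb, y, hy⟩
  exact hI.2.2.2.2 a (h ha) b (h hb) x y hy

lemma subset_hCl {S : Set R} (hadd : ∀ a ∈ S, ∀ b ∈ S, a + b ∈ S) : S ⊆ hCl S := by
  intro s hs
  exact ⟨s, hs, s + s, hadd s hs s hs, 0, by abel_nf⟩

lemma inter_hIdeal {A B : Set R} (hA : IsHIdeal A) (hB : IsHIdeal B) :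
    IsHIdeal (A ∩ B) := by
  refine ⟨⟨0, hA.zero_mem, hB.zero_mem⟩, ?_, ?_, ?_, ?_⟩
  · rintro a ⟨ha1, ha2⟩ b ⟨hb1, hb2⟩
    exact ⟨hA.2.1 a ha1 b hb1, hB.2.1 a ha2 b hb2⟩
  · rintro r a ⟨ha1, ha2⟩
    exact ⟨hA.2.2.1 r a ha1, hB.2.2.1 r a ha2⟩
  · rintro r a ⟨ha1, ha2⟩
    exact ⟨hA.2.2.2.1 r a ha1, hB.2.2.2.1 r a ha2⟩
  · rintro a ⟨ha1, ha2⟩ b ⟨hb1, hb2⟩ x y hxy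
    exact ⟨hA.2.2.2.2 a ha1 b hb1 x y hxy, hB.2.2.2.2 a ha2 b hb2 x y hxy⟩

lemma hCl_hIdeal {S : Set R} (hne : S.Nonempty)
    (hadd : ∀ a ∈ S, ∀ b ∈ S, a + b ∈ S)
    (hl : ∀ r : R, ∀ a ∈ S, r * a ∈ S)
    (hr : ∀ r : R, ∀ a ∈ S, a * r ∈ S) : IsHIdeal (hCl S) := by
  refine ⟨hne.mono (subset_hCl hadd), ?_, ?_, ?_, ?_⟩
  · rintro x1 ⟨a1, ha1, b1, hb1, y1, hy1⟩ x2 ⟨a2, ha2, b2, hb2, y2, hy2⟩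
    refine ⟨a1 + a2, hadd _ ha1 _ ha2, b1 + b2, hadd _ hb1 _ hb2, y1 + y2, ?_⟩
    calc x1 + x2 + (a1 + a2) + (y1 + y2)
        = (x1 + a1 + y1) + (x2 + a2 + y2) := by abel
      _ = (b1 + y1) + (b2 + y2) := by rw [hy1, hy2]
      _ = b1 + b2 + (y1 + y2) := by abel_nf
  · rintro r x ⟨a, ha, b, hb, y, hy⟩
    refine ⟨r * a, hl r a ha, r * b, hl r b hb, r * y, ?_⟩
    have h : r * (x + a + y) = r * (b + y) := by rw [hy]
    simp only [mul_add] at h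
    abel_nf at h ⊢
    exact h
  · rintro r x ⟨a, ha, b, hb, y, hy⟩
    refine ⟨a * r, hr r a ha, b * r, hr r b hb, y * r, ?_⟩
    have h : (x + a + y) * r = (b + y) * r := by rw [hy]
    simp only [add_mul] at h
    abel_nf at h ⊢
    exact h
  · rintro u ⟨a1, ha1, b1, hb1, y1, hy1⟩ v ⟨a2, ha2, b2, hb2, y2, hy2⟩ x y h
    refine ⟨b1 + a2, hadd _ hb1 _ ha2, b2 + a1, hadd _ hb2 _ ha1, y1 + y + y2, ?_⟩
    calc x + (b1 + a2) + (y1 + y + y2)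
        = (b1 + y1) + (x + a2 + y + y2) := by abel
      _ = (u + a1 + y1) + (x + a2 + y + y2) := by rw [hy1]
      _ = (x + u + y) + (a1 + y1 + a2 + y2) := by abel
      _ = (v + y) + (a1 + y1 + a2 + y2) := by rw [h]
      _ = (v + a2 + y2) + (y + a1 + y1) := by abel
      _ = (b2 + y2) + (y + a1 + y1) := by rw [hy2]
      _ = (b2 + a1) + (y1 + y + y2) := by abel

lemma inter_subset_hCl_mul (hidem : ∀ A : Set R, IsHIdeal A → hCl (A * A) = A)
    {A B : Set R} (hA : IsHIdeal A) (hB : IsHIdeal B) :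
    A ∩ B ⊆ hCl (A * B) := by
  have h1 := hidem (A ∩ B) (inter_hIdeal hA hB)
  calc A ∩ B = hCl ((A ∩ B) * (A ∩ B)) := h1.symm
    _ ⊆ hCl (A * B) :=
      hCl_mono (Set.mul_subset_mul Set.inter_subset_left Set.inter_subset_right)

end Aux

theorem stmt_12 {R : Type*} [NonUnitalSemiring R]
    (hidem : ∀ A : Set R, IsHIdeal A → hCl (A * A) = A) :
    (∀ A B C : Set R, IsHIdeal A → IsHIdeal B → IsHIdeal C →
      A ∩ hCl (B + C) = hCl ((A ∩ B) + (A ∩ C))) ∧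
    (∀ A B : Set R, IsHIdeal A → IsHIdeal B →
      ∃ M : Set R, IsHIdeal M ∧ A ∩ M ⊆ B ∧
        ∀ I : Set R, IsHIdeal I → A ∩ I ⊆ B → I ⊆ M) := by
  constructor
  · intro A B C hA hB hC
    -- properties of B + C
    have hBCadd : ∀ a ∈ B + C, ∀ b ∈ B + C, a + b ∈ B + C := by
      rintro _ ⟨b1, hb1, c1, hc1, rfl⟩ _ ⟨b2, hb2, c2, hc2, rfl⟩
      exact ⟨b1 + b2, hB.2.1 _ hb1 _ hb2, c1 + c2, hC.2.1 _ hc1 _ hc2, add_add_add_comm _ _ _ _⟩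
    have hD : IsHIdeal (hCl (B + C)) := by
      refine hCl_hIdeal ⟨0 + 0, 0, hB.zero_mem, 0, hC.zero_mem, rfl⟩ hBCadd ?_ ?_
      · rintro r _ ⟨b, hb, c, hc, rfl⟩
        exact ⟨r * b, hB.2.2.1 r b hb, r * c, hC.2.2.1 r c hc, (mul_add r b c).symm⟩
      · rintro r _ ⟨b, hb, c, hc, rfl⟩
        exact ⟨b * r, hB.2.2.2.1 r b hb, c * r, hC.2.2.2.1 r c hc, (add_mul b c r).symm⟩
    -- properties of T = (A ∩ B) + (A ∩ C)
    set T := (A ∩ B) + (A ∩ C) with hT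
    have hTadd : ∀ a ∈ T, ∀ b ∈ T, a + b ∈ T := by
      rintro _ ⟨p1, hp1, q1, hq1, rfl⟩ _ ⟨p2, hp2, q2, hq2, rfl⟩
      exact ⟨p1 + p2, (inter_hIdeal hA hB).2.1 _ hp1 _ hp2,
        q1 + q2, (inter_hIdeal hA hC).2.1 _ hq1 _ hq2, add_add_add_comm _ _ _ _⟩
    have hTideal : IsHIdeal (hCl T) := by
      refine hCl_hIdeal ⟨0 + 0, 0, (inter_hIdeal hA hB).zero_mem, 0,
        (inter_hIdeal hA hC).zero_mem, rfl⟩ hTadd ?_ ?_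
      · rintro r _ ⟨p, hp, q, hq, rfl⟩
        exact ⟨r * p, (inter_hIdeal hA hB).2.2.1 r p hp,
          r * q, (inter_hIdeal hA hC).2.2.1 r q hq, (mul_add r p q).symm⟩
      · rintro r _ ⟨p, hp, q, hq, rfl⟩
        exact ⟨p * r, (inter_hIdeal hA hB).2.2.2.1 r p hp,
          q * r, (inter_hIdeal hA hC).2.2.2.1 r q hq, (add_mul p q r).symm⟩
    apply Set.Subset.antisymm
    · -- A ∩ hCl (B+C) ⊆ hCl T
      have h1 : A ∩ hCl (B + C) ⊆ hCl (A * hCl (B + C)) :=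
        inter_subset_hCl_mul hidem hA hD
      refine h1.trans ?_
      have h2 : A * hCl (B + C) ⊆ hCl T := by
        rintro _ ⟨a, ha, d, ⟨_, ⟨b, hb, c, hc, rfl⟩, _, ⟨b', hb', c', hc', rfl⟩, y, hy⟩, rfl⟩
        refine ⟨a * b + a * c, ⟨a * b, ⟨hA.2.2.2.1 b a ha, hB.2.2.1 a b hb⟩,
          a * c, ⟨hA.2.2.2.1 c a ha, hC.2.2.1 a c hc⟩, rfl⟩,
          a * b' + a * c', ⟨a * b', ⟨hA.2.2.2.1 b' a ha, hB.2.2.1 a b' hb'⟩,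
          a * c', ⟨hA.2.2.2.1 c' a ha, hC.2.2.1 a c' hc'⟩, rfl⟩, a * y, ?_⟩
        have h : a * (d + (b + c) + y) = a * (b' + c' + y) := by rw [hy]
        simp only [mul_add] at h
        abel_nf at h ⊢
        exact h
      exact (hCl_mono h2).trans (hCl_subset hTideal fun x hx => hx)
    · -- hCl T ⊆ A ∩ hCl (B+C)
      refine hCl_subset (inter_hIdeal hA hD) ?_
      rintro _ ⟨p, hp, q, hq, rfl⟩
      exact ⟨hA.2.1 p hp.1 q hq.1, subset_hCl hBCadd ⟨p, hp.2, q, hq.2, rfl⟩⟩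
  · intro A B hA hB
    set 𝒮 : Set (Set R) := {I | IsHIdeal I ∧ A ∩ I ⊆ B} with h𝒮
    set U : Set R := (AddSubmonoid.closure (⋃₀ 𝒮) : Set R) with hU
    have hUadd : ∀ a ∈ U, ∀ b ∈ U, a + b ∈ U := fun a ha b hb =>
      AddSubmonoid.add_mem _ ha hb
    have hUl : ∀ r : R, ∀ a ∈ U, r * a ∈ U := by
      intro r a ha
      induction ha using AddSubmonoid.closure_induction with
      | mem x hx =>
        obtain ⟨I, hI, hxI⟩ := hx
        exact AddSubmonoid.subset_closure ⟨I, hI, hI.1.2.2.1 r x hxI⟩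
      | zero => simpa [hU] using (AddSubmonoid.closure (⋃₀ 𝒮)).zero_mem
      | add x y hx hy ihx ihy => rw [mul_add]; exact hUadd _ ihx _ ihy
    have hUr : ∀ r : R, ∀ a ∈ U, a * r ∈ U := by
      intro r a ha
      induction ha using AddSubmonoid.closure_induction with
      | mem x hx =>
        obtain ⟨I, hI, hxI⟩ := hx
        exact AddSubmonoid.subset_closure ⟨I, hI, hI.1.2.2.2.1 r x hxI⟩
      | zero => simpa [hU] using (AddSubmonoid.closure (⋃₀ 𝒮)).zero_mem
      | add x y hx hy ihx ihy => rw [add_mul]; exact hUadd _ ihx _ ihy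
    have hAU : ∀ a ∈ A, ∀ u ∈ U, a * u ∈ B := by
      intro a ha u hu
      induction hu using AddSubmonoid.closure_induction with
      | mem x hx =>
        obtain ⟨I, hI, hxI⟩ := hx
        exact hI.2 ⟨hA.2.2.2.1 x a ha, hI.1.2.2.1 a x hxI⟩
      | zero => simpa using hB.zero_mem
      | add x y hx hy ihx ihy => rw [mul_add]; exact hB.2.1 _ ihx _ ihy
    have hM : IsHIdeal (hCl U) :=
      hCl_hIdeal ⟨0, AddSubmonoid.zero_mem _⟩ hUadd hUl hUr
    refine ⟨hCl U, hM, ?_, ?_⟩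
    · -- A ∩ hCl U ⊆ B
      refine (inter_subset_hCl_mul hidem hA hM).trans (hCl_subset hB ?_)
      rintro _ ⟨a, ha, m, ⟨u, hu, u', hu', y, hy⟩, rfl⟩
      have h : a * (m + u + y) = a * (u' + y) := by rw [hy]
      simp only [mul_add] at h
      exact hB.2.2.2.2 (a * u) (hAU a ha u hu) (a * u') (hAU a ha u' hu')
        (a * m) (a * y) h
    · intro I hI hAI
      refine Set.Subset.trans ?_ (subset_hCl hUadd)
      intro x hx
      exact AddSubmonoid.subset_closure ⟨I, ⟨hI, hAI⟩, hx⟩
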